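/- Let A = [a_ij] be an n-by-n reciprocal matrix, let x and y be efficient vectors for A(n), let t ∈ (0,1), and suppose that t·x + (1−t)·y is efficient for A(n). Then the following are equivalent: (1) for all efficient vectors w, v for A with w(n) = x and v(n) = y, the vector t·w + (1−t)·v is efficient for A; (2) x and y have the same maximal n-index and the same minimal n-index for A. -/

import Mathlib

def PosVec {ι : Type*} (w : ι → ℝ) : Prop := ∀ i, 0 < w i

def IsReciprocal {ι : Type*} (A : Matrix ι ι ℝ) : Prop :=
  (∀ i j, 0 < A i j) ∧ ∀ i j, A j i = 1 / A i j

def IsEfficient {ι : Type*} (A : Matrix ι ι ℝ) (w : ι → ℝ) : Prop :=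
  PosVec w ∧ ∀ v : ι → ℝ, PosVec v →
    (∀ i j, |A i j - v i / v j| ≤ |A i j - w i / w j|) →
    ∃ c : ℝ, 0 < c ∧ v = c • w

/-- The principal submatrix `A(n)` obtained from an `(n+1)`-by-`(n+1)` matrix `A` by deleting
the last row and column. -/
def delLastMat {n : ℕ} (A : Matrix (Fin (n + 1)) (Fin (n + 1)) ℝ) :
    Matrix (Fin n) (Fin n) ℝ :=
  A.submatrix Fin.castSucc Fin.castSucc

/-- `x` and `y` have the same maximal `n`-index for `A`: some `p` simultaneously attains
`max_i x i / A i n` and `max_i y i / A i n` (`n` being the last index of `A`). -/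
def SameMaxIndex {n : ℕ} (A : Matrix (Fin (n + 1)) (Fin (n + 1)) ℝ) (x y : Fin n → ℝ) : Prop :=
  ∃ p : Fin n, (∀ i : Fin n,
      x i / A i.castSucc (Fin.last n) ≤ x p / A p.castSucc (Fin.last n)) ∧
    (∀ i : Fin n, y i / A i.castSucc (Fin.last n) ≤ y p / A p.castSucc (Fin.last n))

/-- `x` and `y` have the same minimal `n`-index for `A`: some `q` simultaneously attains
`min_i x i / A i n` and `min_i y i / A i n` (`n` being the last index of `A`). -/
def SameMinIndex {n : ℕ} (A : Matrix (Fin (n + 1)) (Fin (n + 1)) ℝ) (x y : Fin n → ℝ) : Prop :=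
  ∃ q : Fin n, (∀ i : Fin n,
      x q / A q.castSucc (Fin.last n) ≤ x i / A i.castSucc (Fin.last n)) ∧
    (∀ i : Fin n, y q / A q.castSucc (Fin.last n) ≤ y i / A i.castSucc (Fin.last n))

/- ----------------------- auxiliary lemmas ----------------------- -/

private lemma update_dominates {n : ℕ} (A : Matrix (Fin (n + 1)) (Fin (n + 1)) ℝ)
    (w : Fin (n + 1) → ℝ) (hw : PosVec w) (c : ℝ) (hc : 0 < c)
    (h1 : ∀ k : Fin n, |A k.castSucc (Fin.last n) - w k.castSucc / c| ≤
        |A k.castSucc (Fin.last n) - w k.castSucc / w (Fin.last n)|)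
    (h2 : ∀ k : Fin n, |A (Fin.last n) k.castSucc - c / w k.castSucc| ≤
        |A (Fin.last n) k.castSucc - w (Fin.last n) / w k.castSucc|) :
    ∀ i j, |A i j - (Function.update w (Fin.last n) c) i /
        (Function.update w (Fin.last n) c) j| ≤ |A i j - w i / w j| := by
  intro i j
  rcases eq_or_ne i (Fin.last n) with hi | hi
  · rcases eq_or_ne j (Fin.last n) with hj | hj
    · subst hi; subst hj
      simp [Function.update_self, div_self hc.ne', div_self (hw (Fin.last n)).ne']
    · obtain ⟨k, rfl⟩ := Fin.exists_castSucc_eq.mpr hj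
      subst hi
      rw [Function.update_self, Function.update_of_ne (Fin.castSucc_lt_last k).ne]
      exact h2 k
  · obtain ⟨k, rfl⟩ := Fin.exists_castSucc_eq.mpr hi
    rw [Function.update_of_ne (Fin.castSucc_lt_last k).ne]
    rcases eq_or_ne j (Fin.last n) with hj | hj
    · subst hj
      rw [Function.update_self]
      exact h1 k
    · obtain ⟨m, rfl⟩ := Fin.exists_castSucc_eq.mpr hj
      rw [Function.update_of_ne (Fin.castSucc_lt_last m).ne]

/-- The extension lemma: if `w` restricted to the first `n` coordinates is efficient for
`A(n)`, then `w` is efficient for `A` iff the last entry of `w` lies between the minimum and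
the maximum of `w i / A i n`. -/
private lemma ext_eff_iff {n : ℕ} (hn : 0 < n)
    (A : Matrix (Fin (n + 1)) (Fin (n + 1)) ℝ) (hA : IsReciprocal A)
    (w : Fin (n + 1) → ℝ) (hw : PosVec w)
    (hx : IsEfficient (delLastMat A) (w ∘ Fin.castSucc)) :
    IsEfficient A w ↔
      ((∃ i : Fin n, w i.castSucc / A i.castSucc (Fin.last n) ≤ w (Fin.last n)) ∧
       (∃ i : Fin n, w (Fin.last n) ≤ w i.castSucc / A i.castSucc (Fin.last n))) := by
  have hwL : 0 < w (Fin.last n) := hw _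
  have hne : (Finset.univ : Finset (Fin n)).Nonempty := ⟨⟨0, hn⟩, Finset.mem_univ _⟩
  have hz : (⟨0, hn⟩ : Fin n).castSucc ≠ Fin.last n := (Fin.castSucc_lt_last _).ne
  constructor
  · intro heff
    constructor
    · -- lower bound: otherwise raise the last entry to the minimum
      by_contra hcon
      push_neg at hcon
      obtain ⟨q, -, hq⟩ := Finset.exists_min_image Finset.univ
        (fun i : Fin n => w i.castSucc / A i.castSucc (Fin.last n)) hne
      set c := w q.castSucc / A q.castSucc (Fin.last n) with hcdef
      have hcpos : 0 < c := div_pos (hw _) (hA.1 _ _)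
      have hLc : w (Fin.last n) < c := hcon q
      have key : ∀ k : Fin n, A k.castSucc (Fin.last n) * c ≤ w k.castSucc := by
        intro k
        have hk := (le_div_iff₀ (hA.1 k.castSucc (Fin.last n))).mp (hq k (Finset.mem_univ k))
        linarith [hk, mul_comm c (A k.castSucc (Fin.last n))]
      have h1 : ∀ k : Fin n, |A k.castSucc (Fin.last n) - w k.castSucc / c| ≤
          |A k.castSucc (Fin.last n) - w k.castSucc / w (Fin.last n)| := by
        intro k
        have hak : 0 < A k.castSucc (Fin.last n) := hA.1 _ _
        have hwk : 0 < w k.castSucc := hw _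
        have e1 : A k.castSucc (Fin.last n) ≤ w k.castSucc / c :=
          (le_div_iff₀ hcpos).mpr (key k)
        have e2 : w k.castSucc / c ≤ w k.castSucc / w (Fin.last n) := by
          rw [div_le_div_iff₀ hcpos hwL]; nlinarith
        rw [abs_of_nonpos (by linarith), abs_of_nonpos (by linarith)]
        linarith
      have h2 : ∀ k : Fin n, |A (Fin.last n) k.castSucc - c / w k.castSucc| ≤
          |A (Fin.last n) k.castSucc - w (Fin.last n) / w k.castSucc| := by
        intro k
        have hak : 0 < A k.castSucc (Fin.last n) := hA.1 _ _
        have hwk : 0 < w k.castSucc := hw _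
        rw [hA.2 k.castSucc (Fin.last n)]
        have e1 : c / w k.castSucc ≤ 1 / A k.castSucc (Fin.last n) := by
          rw [div_le_div_iff₀ hwk hak]; nlinarith [key k]
        have e2 : w (Fin.last n) / w k.castSucc ≤ c / w k.castSucc := by
          rw [div_le_div_iff₀ hwk hwk]; nlinarith
        rw [abs_of_nonneg (by linarith), abs_of_nonneg (by linarith)]
        linarith
      have hvpos : PosVec (Function.update w (Fin.last n) c) := by
        intro i
        rcases eq_or_ne i (Fin.last n) with h | h
        · subst h; rw [Function.update_self]; exact hcpos
        · rw [Function.update_of_ne h]; exact hw i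
      obtain ⟨c', hc', hv⟩ := heff.2 _ hvpos (update_dominates A w hw c hcpos h1 h2)
      have e0 : w ((⟨0, hn⟩ : Fin n).castSucc) = c' * w ((⟨0, hn⟩ : Fin n).castSucc) := by
        have := congrFun hv ((⟨0, hn⟩ : Fin n).castSucc)
        rwa [Function.update_of_ne hz, Pi.smul_apply, smul_eq_mul] at this
      have hc1 : c' = 1 := by
        have h0 : 0 < w ((⟨0, hn⟩ : Fin n).castSucc) := hw _
        have : (c' - 1) * w ((⟨0, hn⟩ : Fin n).castSucc) = 0 := by linarith
        rcases mul_eq_zero.mp this with h | h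
        · linarith
        · exact absurd h h0.ne'
      have eL : c = w (Fin.last n) := by
        have := congrFun hv (Fin.last n)
        rwa [Function.update_self, Pi.smul_apply, smul_eq_mul, hc1, one_mul] at this
      linarith
    · -- upper bound: otherwise lower the last entry to the maximum
      by_contra hcon
      push_neg at hcon
      obtain ⟨p, -, hp⟩ := Finset.exists_max_image Finset.univ
        (fun i : Fin n => w i.castSucc / A i.castSucc (Fin.last n)) hne
      set c := w p.castSucc / A p.castSucc (Fin.last n) with hcdef
      have hcpos : 0 < c := div_pos (hw _) (hA.1 _ _)
      have hLc : c < w (Fin.last n) := hcon p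
      have key : ∀ k : Fin n, w k.castSucc ≤ A k.castSucc (Fin.last n) * c := by
        intro k
        have hk := (div_le_iff₀ (hA.1 k.castSucc (Fin.last n))).mp (hp k (Finset.mem_univ k))
        linarith [hk, mul_comm c (A k.castSucc (Fin.last n))]
      have h1 : ∀ k : Fin n, |A k.castSucc (Fin.last n) - w k.castSucc / c| ≤
          |A k.castSucc (Fin.last n) - w k.castSucc / w (Fin.last n)| := by
        intro k
        have hak : 0 < A k.castSucc (Fin.last n) := hA.1 _ _
        have hwk : 0 < w k.castSucc := hw _
        have e1 : w k.castSucc / c ≤ A k.castSucc (Fin.last n) :=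
          (div_le_iff₀ hcpos).mpr (by nlinarith [key k])
        have e2 : w k.castSucc / w (Fin.last n) ≤ w k.castSucc / c := by
          rw [div_le_div_iff₀ hwL hcpos]; nlinarith
        rw [abs_of_nonneg (by linarith), abs_of_nonneg (by linarith)]
        linarith
      have h2 : ∀ k : Fin n, |A (Fin.last n) k.castSucc - c / w k.castSucc| ≤
          |A (Fin.last n) k.castSucc - w (Fin.last n) / w k.castSucc| := by
        intro k
        have hak : 0 < A k.castSucc (Fin.last n) := hA.1 _ _
        have hwk : 0 < w k.castSucc := hw _
        rw [hA.2 k.castSucc (Fin.last n)]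
        have e1 : 1 / A k.castSucc (Fin.last n) ≤ c / w k.castSucc := by
          rw [div_le_div_iff₀ hak hwk]; nlinarith [key k]
        have e2 : c / w k.castSucc ≤ w (Fin.last n) / w k.castSucc := by
          rw [div_le_div_iff₀ hwk hwk]; nlinarith
        rw [abs_of_nonpos (by linarith), abs_of_nonpos (by linarith)]
        linarith
      have hvpos : PosVec (Function.update w (Fin.last n) c) := by
        intro i
        rcases eq_or_ne i (Fin.last n) with h | h
        · subst h; rw [Function.update_self]; exact hcpos
        · rw [Function.update_of_ne h]; exact hw i
      obtain ⟨c', hc', hv⟩ := heff.2 _ hvpos (update_dominates A w hw c hcpos h1 h2)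
      have e0 : w ((⟨0, hn⟩ : Fin n).castSucc) = c' * w ((⟨0, hn⟩ : Fin n).castSucc) := by
        have := congrFun hv ((⟨0, hn⟩ : Fin n).castSucc)
        rwa [Function.update_of_ne hz, Pi.smul_apply, smul_eq_mul] at this
      have hc1 : c' = 1 := by
        have h0 : 0 < w ((⟨0, hn⟩ : Fin n).castSucc) := hw _
        have : (c' - 1) * w ((⟨0, hn⟩ : Fin n).castSucc) = 0 := by linarith
        rcases mul_eq_zero.mp this with h | h
        · linarith
        · exact absurd h h0.ne'
      have eL : c = w (Fin.last n) := by
        have := congrFun hv (Fin.last n)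
        rwa [Function.update_self, Pi.smul_apply, smul_eq_mul, hc1, one_mul] at this
      linarith
  · rintro ⟨⟨q, hq⟩, ⟨p, hp⟩⟩
    refine ⟨hw, fun v hv hdom => ?_⟩
    obtain ⟨c, hc, hcv⟩ := hx.2 (v ∘ Fin.castSucc) (fun i => hv _)
      (fun i j => hdom i.castSucc j.castSucc)
    have hvc : ∀ i : Fin n, v i.castSucc = c * w i.castSucc := by
      intro i
      have := congrFun hcv i
      simpa [smul_eq_mul] using this
    have hvL : 0 < v (Fin.last n) := hv _
    -- upper bound for v at last, from the max witness p
    have hap : 0 < A p.castSucc (Fin.last n) := hA.1 _ _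
    have hwp : 0 < w p.castSucc := hw _
    have hvp : 0 < v p.castSucc := hv _
    have e1 : A p.castSucc (Fin.last n) ≤ w p.castSucc / w (Fin.last n) := by
      rw [le_div_iff₀ hwL]
      rw [le_div_iff₀ hap] at hp
      nlinarith [hp]
    have e2 : v p.castSucc / v (Fin.last n) ≤ w p.castSucc / w (Fin.last n) := by
      have habs := hdom p.castSucc (Fin.last n)
      have hr : |A p.castSucc (Fin.last n) - w p.castSucc / w (Fin.last n)| =
          w p.castSucc / w (Fin.last n) - A p.castSucc (Fin.last n) := by
        rw [abs_of_nonpos (by linarith)]; ring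
      rw [hr] at habs
      have := neg_abs_le (A p.castSucc (Fin.last n) - v p.castSucc / v (Fin.last n))
      linarith
    have upper : c * w (Fin.last n) ≤ v (Fin.last n) := by
      rw [div_le_div_iff₀ hvL hwL] at e2
      rw [hvc p] at e2
      nlinarith
    -- lower bound for v at last, from the min witness q
    have haq : 0 < A q.castSucc (Fin.last n) := hA.1 _ _
    have hwq : 0 < w q.castSucc := hw _
    have e3 : w q.castSucc / w (Fin.last n) ≤ A q.castSucc (Fin.last n) := by
      rw [div_le_iff₀ hwL]
      rw [div_le_iff₀ haq] at hq
      nlinarith [hq]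
    have e4 : w q.castSucc / w (Fin.last n) ≤ v q.castSucc / v (Fin.last n) := by
      have habs := hdom q.castSucc (Fin.last n)
      have hr : |A q.castSucc (Fin.last n) - w q.castSucc / w (Fin.last n)| =
          A q.castSucc (Fin.last n) - w q.castSucc / w (Fin.last n) :=
        abs_of_nonneg (by linarith)
      rw [hr] at habs
      have := le_abs_self (A q.castSucc (Fin.last n) - v q.castSucc / v (Fin.last n))
      linarith
    have lower : v (Fin.last n) ≤ c * w (Fin.last n) := by
      rw [div_le_div_iff₀ hwL hvL] at e4
      rw [hvc q] at e4
      nlinarith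
    refine ⟨c, hc, funext fun i => ?_⟩
    rcases eq_or_ne i (Fin.last n) with h | h
    · subst h
      rw [Pi.smul_apply, smul_eq_mul]
      linarith
    · obtain ⟨k, rfl⟩ := Fin.exists_castSucc_eq.mpr h
      rw [Pi.smul_apply, smul_eq_mul]
      exact hvc k

private lemma snoc_pos {n : ℕ} {x : Fin n → ℝ} (hx : PosVec x) {c : ℝ} (hc : 0 < c) :
    PosVec (Fin.snoc x c : Fin (n + 1) → ℝ) := by
  intro i
  rcases eq_or_ne i (Fin.last n) with h | h
  · subst h; rw [Fin.snoc_last]; exact hc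
  · obtain ⟨k, rfl⟩ := Fin.exists_castSucc_eq.mpr h
    rw [Fin.snoc_castSucc]; exact hx k

/-- with `x`, `y` and `t x + (1-t) y` efficient for `A(n)`, all efficient
extensions `w`, `v` of `x`, `y` satisfy `t w + (1-t) v ∈ E(A)` iff `x` and `y` have the same
maximal and the same minimal `n`-indices for `A`. -/
theorem convex_combination_of_extensions_efficient_iff {n : ℕ} (hn : 0 < n)
    (A : Matrix (Fin (n + 1)) (Fin (n + 1)) ℝ) (hA : IsReciprocal A)
    (x y : Fin n → ℝ) (hx : IsEfficient (delLastMat A) x) (hy : IsEfficient (delLastMat A) y)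
    (t : ℝ) (ht0 : 0 < t) (ht1 : t < 1)
    (hxy : IsEfficient (delLastMat A) (t • x + (1 - t) • y)) :
    ((∀ w v : Fin (n + 1) → ℝ, IsEfficient A w → IsEfficient A v →
        w ∘ Fin.castSucc = x → v ∘ Fin.castSucc = y →
        IsEfficient A (t • w + (1 - t) • v)) ↔
      (SameMaxIndex A x y ∧ SameMinIndex A x y)) := by
  have hne : (Finset.univ : Finset (Fin n)).Nonempty := ⟨⟨0, hn⟩, Finset.mem_univ _⟩
  have hxpos : PosVec x := hx.1
  have hypos : PosVec y := hy.1
  constructor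
  · intro h
    -- helper to build an efficient extension of a vector with prescribed admissible last entry
    have build : ∀ (z : Fin n → ℝ), IsEfficient (delLastMat A) z → ∀ r : Fin n,
        IsEfficient A (Fin.snoc z (z r / A r.castSucc (Fin.last n))) := by
      intro z hz r
      have hzpos : PosVec z := hz.1
      have hcpos : 0 < z r / A r.castSucc (Fin.last n) := div_pos (hzpos r) (hA.1 _ _)
      have hcomp : (Fin.snoc z (z r / A r.castSucc (Fin.last n)) : Fin (n+1) → ℝ) ∘
          Fin.castSucc = z := funext fun i => Fin.snoc_castSucc _ _ i
      refine (ext_eff_iff hn A hA _ (snoc_pos hzpos hcpos) (by rwa [hcomp])).2 ⟨⟨r, ?_⟩, ⟨r, ?_⟩⟩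
      · rw [Fin.snoc_last, Fin.snoc_castSucc]
      · rw [Fin.snoc_last, Fin.snoc_castSucc]
    constructor
    · -- same max index
      obtain ⟨p, -, hp⟩ := Finset.exists_max_image Finset.univ
        (fun i : Fin n => x i / A i.castSucc (Fin.last n)) hne
      obtain ⟨p', -, hp'⟩ := Finset.exists_max_image Finset.univ
        (fun i : Fin n => y i / A i.castSucc (Fin.last n)) hne
      set w : Fin (n+1) → ℝ := Fin.snoc x (x p / A p.castSucc (Fin.last n)) with hwdef
      set v : Fin (n+1) → ℝ := Fin.snoc y (y p' / A p'.castSucc (Fin.last n)) with hvdef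
      have hwc : w ∘ Fin.castSucc = x := by
        funext i
        simp only [hwdef, Function.comp_apply, Fin.snoc_castSucc]
      have hvc : v ∘ Fin.castSucc = y := by
        funext i
        simp only [hvdef, Function.comp_apply, Fin.snoc_castSucc]
      have hzeff := h w v (build x hx p) (build y hy p') hwc hvc
      have hzpos : PosVec (t • w + (1 - t) • v) := by
        intro i
        have := hzeff.1 i
        exact this
      have hzc : (t • w + (1 - t) • v) ∘ Fin.castSucc = t • x + (1 - t) • y := by
        funext i
        simp only [Function.comp_apply, Pi.add_apply, Pi.smul_apply, smul_eq_mul]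
        rw [show w i.castSucc = x i from congrFun hwc i,
          show v i.castSucc = y i from congrFun hvc i]
      obtain ⟨-, ⟨i, hi⟩⟩ := (ext_eff_iff hn A hA _ hzpos (by rwa [hzc])).1 hzeff
      have hiz : (t • w + (1 - t) • v) i.castSucc = t * x i + (1 - t) * y i := by
        simp only [Pi.add_apply, Pi.smul_apply, smul_eq_mul]
        rw [show w i.castSucc = x i from congrFun hwc i,
          show v i.castSucc = y i from congrFun hvc i]
      have hL : (t • w + (1 - t) • v) (Fin.last n) =
          t * (x p / A p.castSucc (Fin.last n)) + (1 - t) * (y p' / A p'.castSucc (Fin.last n)) := by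
        simp only [Pi.add_apply, Pi.smul_apply, smul_eq_mul, hwdef, hvdef, Fin.snoc_last]
      rw [hiz, hL] at hi
      have hdiv : (t * x i + (1 - t) * y i) / A i.castSucc (Fin.last n) =
          t * (x i / A i.castSucc (Fin.last n)) + (1 - t) * (y i / A i.castSucc (Fin.last n)) := by
        ring
      rw [hdiv] at hi
      have hx1 := hp i (Finset.mem_univ i)
      have hy1 := hp' i (Finset.mem_univ i)
      have ht1' : (0:ℝ) ≤ 1 - t := by linarith
      have hxx : t * (x p / A p.castSucc (Fin.last n)) ≤
          t * (x i / A i.castSucc (Fin.last n)) := by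
        linarith [mul_le_mul_of_nonneg_left hy1 ht1']
      have hyy : (1 - t) * (y p' / A p'.castSucc (Fin.last n)) ≤
          (1 - t) * (y i / A i.castSucc (Fin.last n)) := by
        linarith [mul_le_mul_of_nonneg_left hx1 ht0.le]
      have ex : x p / A p.castSucc (Fin.last n) = x i / A i.castSucc (Fin.last n) :=
        le_antisymm ((mul_le_mul_iff_right₀ ht0).mp hxx) hx1
      have ey : y p' / A p'.castSucc (Fin.last n) = y i / A i.castSucc (Fin.last n) :=
        le_antisymm ((mul_le_mul_iff_right₀ (by linarith : (0:ℝ) < 1 - t)).mp hyy) hy1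
      exact ⟨i, fun j => (hp j (Finset.mem_univ j)).trans_eq ex,
        fun j => (hp' j (Finset.mem_univ j)).trans_eq ey⟩
    · -- same min index
      obtain ⟨p, -, hp⟩ := Finset.exists_min_image Finset.univ
        (fun i : Fin n => x i / A i.castSucc (Fin.last n)) hne
      obtain ⟨p', -, hp'⟩ := Finset.exists_min_image Finset.univ
        (fun i : Fin n => y i / A i.castSucc (Fin.last n)) hne
      set w : Fin (n+1) → ℝ := Fin.snoc x (x p / A p.castSucc (Fin.last n)) with hwdef
      set v : Fin (n+1) → ℝ := Fin.snoc y (y p' / A p'.castSucc (Fin.last n)) with hvdef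
      have hwc : w ∘ Fin.castSucc = x := by
        funext i
        simp only [hwdef, Function.comp_apply, Fin.snoc_castSucc]
      have hvc : v ∘ Fin.castSucc = y := by
        funext i
        simp only [hvdef, Function.comp_apply, Fin.snoc_castSucc]
      have hzeff := h w v (build x hx p) (build y hy p') hwc hvc
      have hzpos : PosVec (t • w + (1 - t) • v) := hzeff.1
      have hzc : (t • w + (1 - t) • v) ∘ Fin.castSucc = t • x + (1 - t) • y := by
        funext i
        simp only [Function.comp_apply, Pi.add_apply, Pi.smul_apply, smul_eq_mul]
        rw [show w i.castSucc = x i from congrFun hwc i,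
          show v i.castSucc = y i from congrFun hvc i]
      obtain ⟨⟨i, hi⟩, -⟩ := (ext_eff_iff hn A hA _ hzpos (by rwa [hzc])).1 hzeff
      have hiz : (t • w + (1 - t) • v) i.castSucc = t * x i + (1 - t) * y i := by
        simp only [Pi.add_apply, Pi.smul_apply, smul_eq_mul]
        rw [show w i.castSucc = x i from congrFun hwc i,
          show v i.castSucc = y i from congrFun hvc i]
      have hL : (t • w + (1 - t) • v) (Fin.last n) =
          t * (x p / A p.castSucc (Fin.last n)) + (1 - t) * (y p' / A p'.castSucc (Fin.last n)) := by
        simp only [Pi.add_apply, Pi.smul_apply, smul_eq_mul, hwdef, hvdef, Fin.snoc_last]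
      rw [hiz, hL] at hi
      have hdiv : (t * x i + (1 - t) * y i) / A i.castSucc (Fin.last n) =
          t * (x i / A i.castSucc (Fin.last n)) + (1 - t) * (y i / A i.castSucc (Fin.last n)) := by
        ring
      rw [hdiv] at hi
      have hx1 := hp i (Finset.mem_univ i)
      have hy1 := hp' i (Finset.mem_univ i)
      have ht1' : (0:ℝ) ≤ 1 - t := by linarith
      have hxx : t * (x i / A i.castSucc (Fin.last n)) ≤
          t * (x p / A p.castSucc (Fin.last n)) := by
        linarith [mul_le_mul_of_nonneg_left hy1 ht1']
      have hyy : (1 - t) * (y i / A i.castSucc (Fin.last n)) ≤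
          (1 - t) * (y p' / A p'.castSucc (Fin.last n)) := by
        linarith [mul_le_mul_of_nonneg_left hx1 ht0.le]
      have ex : x i / A i.castSucc (Fin.last n) = x p / A p.castSucc (Fin.last n) :=
        le_antisymm ((mul_le_mul_iff_right₀ ht0).mp hxx) hx1
      have ey : y i / A i.castSucc (Fin.last n) = y p' / A p'.castSucc (Fin.last n) :=
        le_antisymm ((mul_le_mul_iff_right₀ (by linarith : (0:ℝ) < 1 - t)).mp hyy) hy1
      refine ⟨i, fun j => ?_, fun j => ?_⟩
      · rw [ex]; exact hp j (Finset.mem_univ j)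
      · rw [ey]; exact hp' j (Finset.mem_univ j)
  · rintro ⟨⟨p, hxp, hyp⟩, ⟨q, hxq, hyq⟩⟩ w v hweff hveff hwc hvc
    have hwpos : PosVec w := hweff.1
    have hvpos : PosVec v := hveff.1
    have hzpos : PosVec (t • w + (1 - t) • v) := by
      intro i
      have h1 := hwpos i
      have h2 := hvpos i
      simp only [Pi.add_apply, Pi.smul_apply, smul_eq_mul]
      nlinarith
    have hzc : (t • w + (1 - t) • v) ∘ Fin.castSucc = t • x + (1 - t) • y := by
      funext i
      simp only [Function.comp_apply, Pi.add_apply, Pi.smul_apply, smul_eq_mul]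
      rw [show w i.castSucc = x i from congrFun hwc i,
        show v i.castSucc = y i from congrFun hvc i]
    obtain ⟨⟨iw, hiw⟩, ⟨jw, hjw⟩⟩ :=
      (ext_eff_iff hn A hA w hwpos (by rwa [hwc])).1 hweff
    obtain ⟨⟨iv, hiv⟩, ⟨jv, hjv⟩⟩ :=
      (ext_eff_iff hn A hA v hvpos (by rwa [hvc])).1 hveff
    rw [show w iw.castSucc = x iw from congrFun hwc iw] at hiw
    rw [show w jw.castSucc = x jw from congrFun hwc jw] at hjw
    rw [show v iv.castSucc = y iv from congrFun hvc iv] at hiv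
    rw [show v jv.castSucc = y jv from congrFun hvc jv] at hjv
    -- bounds for w last and v last
    have hw1 : x q / A q.castSucc (Fin.last n) ≤ w (Fin.last n) := (hxq iw).trans hiw
    have hw2 : w (Fin.last n) ≤ x p / A p.castSucc (Fin.last n) := hjw.trans (hxp jw)
    have hv1 : y q / A q.castSucc (Fin.last n) ≤ v (Fin.last n) := (hyq iv).trans hiv
    have hv2 : v (Fin.last n) ≤ y p / A p.castSucc (Fin.last n) := hjv.trans (hyp jv)
    refine (ext_eff_iff hn A hA _ hzpos (by rwa [hzc])).2 ⟨⟨q, ?_⟩, ⟨p, ?_⟩⟩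
    · have hq1 : (t • w + (1 - t) • v) q.castSucc = t * x q + (1 - t) * y q := by
        simp only [Pi.add_apply, Pi.smul_apply, smul_eq_mul]
        rw [show w q.castSucc = x q from congrFun hwc q,
          show v q.castSucc = y q from congrFun hvc q]
      have hL : (t • w + (1 - t) • v) (Fin.last n) =
          t * w (Fin.last n) + (1 - t) * v (Fin.last n) := by
        simp only [Pi.add_apply, Pi.smul_apply, smul_eq_mul]
      rw [hq1, hL]
      have hdiv : (t * x q + (1 - t) * y q) / A q.castSucc (Fin.last n) =
          t * (x q / A q.castSucc (Fin.last n)) + (1 - t) * (y q / A q.castSucc (Fin.last n)) := by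
        ring
      rw [hdiv]
      linarith [mul_le_mul_of_nonneg_left hw1 ht0.le,
        mul_le_mul_of_nonneg_left hv1 (show (0:ℝ) ≤ 1 - t by linarith)]
    · have hp1 : (t • w + (1 - t) • v) p.castSucc = t * x p + (1 - t) * y p := by
        simp only [Pi.add_apply, Pi.smul_apply, smul_eq_mul]
        rw [show w p.castSucc = x p from congrFun hwc p,
          show v p.castSucc = y p from congrFun hvc p]
      have hL : (t • w + (1 - t) • v) (Fin.last n) =
          t * w (Fin.last n) + (1 - t) * v (Fin.last n) := by
        simp only [Pi.add_apply, Pi.smul_apply, smul_eq_mul]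
      rw [hp1, hL]
      have hdiv : (t * x p + (1 - t) * y p) / A p.castSucc (Fin.last n) =
          t * (x p / A p.castSucc (Fin.last n)) + (1 - t) * (y p / A p.castSucc (Fin.last n)) := by
        ring
      rw [hdiv]
      linarith [mul_le_mul_of_nonneg_left hw2 ht0.le,
        mul_le_mul_of_nonneg_left hv2 (show (0:ℝ) ≤ 1 - t by linarith)]
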